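/- Assume the CFL condition 0 ≤ λL ≤ 1. Let y₀ : ℤ → ℝ be a bounded sequence and let w⁰_i = Σ_{j≥i} I_{j−i} y₀_j be the averaged initial data, with iterates w^{n+1} = G(w^n). Then for every i ∈ ℤ and every n ≥ 0, inf_{j∈ℤ} y₀_j ≤ w^n_i ≤ sup_{j∈ℤ} y₀_j. -/

import Mathlib

open MeasureTheory

/-- Discrete averaging: `(discAvg I y) i = Σ_{j ≥ i} I_{j-i} y_j`. -/
noncomputable def discAvg (I : ℕ → ℝ) (y : ℤ → ℝ) (i : ℤ) : ℝ :=
  ∑' k : ℕ, I k * y (i + (k : ℤ))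

/-- One step of the filtered scheme:
`G(w)_i = w_i + λ Σ_{j ≥ i} I_{j-i} (W(w_{j+1}) - W(w_j))`. -/
noncomputable def schemeStep (I : ℕ → ℝ) (W : ℝ → ℝ) (lam : ℝ) (w : ℤ → ℝ) (i : ℤ) : ℝ :=
  w i + lam * ∑' k : ℕ, I k * (W (w (i + (k : ℤ) + 1)) - W (w (i + (k : ℤ))))

/-- Key tsum telescoping lower bound. -/
lemma aux_tsum_lb (I : ℕ → ℝ) (hIpos : ∀ k, 0 ≤ I k) (hImono : ∀ k, I (k+1) ≤ I k)
    (hIsum : Summable I) (u : ℕ → ℝ) (hu0 : ∀ k, 0 ≤ u k) (C : ℝ) (huC : ∀ k, u k ≤ C) :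
    -(I 0 * u 0) ≤ ∑' k : ℕ, I k * (u (k+1) - u k) := by
  have sb : Summable (fun k => I k * u k) :=
    Summable.of_nonneg_of_le (fun k => mul_nonneg (hIpos k) (hu0 k))
      (fun k => mul_le_mul_of_nonneg_left (huC k) (hIpos k)) (hIsum.mul_right C)
  have sa : Summable (fun k => I k * u (k+1)) :=
    Summable.of_nonneg_of_le (fun k => mul_nonneg (hIpos k) (hu0 (k+1)))
      (fun k => mul_le_mul_of_nonneg_left (huC (k+1)) (hIpos k)) (hIsum.mul_right C)
  have sc : Summable (fun k => I (k+1) * u (k+1)) := by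
    have := (summable_nat_add_iff (f := fun k => I k * u k) 1).2 sb
    exact this
  have h2 : ∑' k : ℕ, I k * u k = I 0 * u 0 + ∑' k : ℕ, I (k+1) * u (k+1) :=
    Summable.tsum_eq_zero_add sb
  have hs1 : Summable (fun k => (I k - I (k+1)) * u (k+1)) := by
    have := sa.sub sc
    simpa [sub_mul] using this
  have e : ∑' k : ℕ, I k * (u (k+1) - u k)
      = (∑' k : ℕ, (I k - I (k+1)) * u (k+1)) - I 0 * u 0 := by
    have hfun : (fun k : ℕ => I k * (u (k+1) - u k))
        = fun k : ℕ => ((I k - I (k+1)) * u (k+1)) - (I k * u k - I (k+1) * u (k+1)) :=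
      funext fun k => by ring
    rw [hfun, Summable.tsum_sub hs1 (sb.sub sc), Summable.tsum_sub sb sc, h2]
    ring
  rw [e]
  have hnn : 0 ≤ ∑' k : ℕ, (I k - I (k+1)) * u (k+1) :=
    tsum_nonneg fun k => mul_nonneg (sub_nonneg.2 (hImono k)) (hu0 _)
  linarith

/-- One step of the scheme preserves the interval `[m, M]`. -/
lemma step_preserves (I : ℕ → ℝ) (hIpos : ∀ k, 0 ≤ I k) (hImono : ∀ k, I (k+1) ≤ I k)
    (hI0 : I 0 ≤ 1) (hIsum : Summable I)
    (W : ℝ → ℝ) (L lam m M : ℝ) (hlam : 0 ≤ lam) (hlamL : lam * L ≤ 1) (hL : 0 ≤ L)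
    (hWmono : Monotone W) (hWlip : ∀ a b : ℝ, a ≤ b → W b - W a ≤ L * (b - a))
    (v : ℤ → ℝ) (hv : ∀ j, m ≤ v j ∧ v j ≤ M) (i : ℤ) :
    m ≤ schemeStep I W lam v i ∧ schemeStep I W lam v i ≤ M := by
  have hmM : m ≤ M := le_trans (hv i).1 (hv i).2
  have hidx : ∀ k : ℕ, i + (k : ℤ) + 1 = i + ((k+1 : ℕ) : ℤ) := by
    intro k; push_cast; ring
  constructor
  · -- lower bound
    set u : ℕ → ℝ := fun k => W (v (i + (k : ℤ))) - W m with hu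
    have hu0 : ∀ k, 0 ≤ u k := fun k => sub_nonneg.2 (hWmono (hv _).1)
    have huC : ∀ k, u k ≤ L * (M - m) := by
      intro k
      calc u k ≤ L * (v (i + (k:ℤ)) - m) := hWlip _ _ (hv _).1
        _ ≤ L * (M - m) := by
            apply mul_le_mul_of_nonneg_left _ hL
            linarith [(hv (i + (k:ℤ))).2]
    have hkey : -(I 0 * u 0) ≤ ∑' k : ℕ, I k * (u (k+1) - u k) :=
      aux_tsum_lb I hIpos hImono hIsum u hu0 _ huC
    have hcongr : ∑' k : ℕ, I k * (W (v (i + (k : ℤ) + 1)) - W (v (i + (k : ℤ))))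
        = ∑' k : ℕ, I k * (u (k+1) - u k) := by
      refine tsum_congr fun k => ?_
      rw [hidx k]; simp [hu]
    have hu0eq : u 0 = W (v i) - W m := by simp [hu]
    have hWvI : W (v i) - W m ≤ L * (v i - m) := hWlip _ _ (hv i).1
    have hWvI' : 0 ≤ W (v i) - W m := sub_nonneg.2 (hWmono (hv i).1)
    have hvi : m ≤ v i := (hv i).1
    unfold schemeStep
    rw [hcongr]
    have hS : -(I 0 * (W (v i) - W m)) ≤ ∑' k : ℕ, I k * (u (k+1) - u k) := by
      rw [← hu0eq]; exact hkey
    nlinarith [mul_nonneg hlam (hIpos 0), mul_le_mul_of_nonneg_left hWvI (mul_nonneg hlam (hIpos 0)),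
      mul_nonneg (mul_nonneg hlam hL) (sub_nonneg.2 hvi),
      mul_le_mul_of_nonneg_right hI0 (mul_nonneg (mul_nonneg hlam hL) (sub_nonneg.2 hvi)),
      mul_le_mul_of_nonneg_left hS hlam]
  · -- upper bound
    set u : ℕ → ℝ := fun k => W M - W (v (i + (k : ℤ))) with hu
    have hu0 : ∀ k, 0 ≤ u k := fun k => sub_nonneg.2 (hWmono (hv _).2)
    have huC : ∀ k, u k ≤ L * (M - m) := by
      intro k
      calc u k ≤ L * (M - v (i + (k:ℤ))) := hWlip _ _ (hv _).2
        _ ≤ L * (M - m) := by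
            apply mul_le_mul_of_nonneg_left _ hL
            linarith [(hv (i + (k:ℤ))).1]
    have hkey : -(I 0 * u 0) ≤ ∑' k : ℕ, I k * (u (k+1) - u k) :=
      aux_tsum_lb I hIpos hImono hIsum u hu0 _ huC
    have hcongr : ∑' k : ℕ, I k * (W (v (i + (k : ℤ) + 1)) - W (v (i + (k : ℤ))))
        = -∑' k : ℕ, I k * (u (k+1) - u k) := by
      rw [← tsum_neg]
      refine tsum_congr fun k => ?_
      rw [hidx k]; simp [hu]; ring
    have hu0eq : u 0 = W M - W (v i) := by simp [hu]
    have hWvI : W M - W (v i) ≤ L * (M - v i) := hWlip _ _ (hv i).2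
    have hvi : v i ≤ M := (hv i).2
    unfold schemeStep
    rw [hcongr]
    have hS : -(I 0 * (W M - W (v i))) ≤ ∑' k : ℕ, I k * (u (k+1) - u k) := by
      rw [← hu0eq]; exact hkey
    nlinarith [mul_nonneg hlam (hIpos 0), mul_le_mul_of_nonneg_left hWvI (mul_nonneg hlam (hIpos 0)),
      mul_nonneg (mul_nonneg hlam hL) (sub_nonneg.2 hvi),
      mul_le_mul_of_nonneg_right hI0 (mul_nonneg (mul_nonneg hlam hL) (sub_nonneg.2 hvi)),
      mul_le_mul_of_nonneg_left hS hlam]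

/-- under the CFL condition `0 ≤ λL ≤ 1`, the iterates of the
filtered scheme started from the averaged initial data satisfy the maximum
principle `inf y₀ ≤ w^n_i ≤ sup y₀`. -/
theorem stmt_2
    (Φ : ℝ → ℝ) (α Δz Δt lam L : ℝ)
    (hα : 0 < α) (hΔz : 0 < Δz) (hΔt : 0 < Δt) (hlam : lam = Δt / Δz)
    (hΦnonneg : ∀ z : ℝ, 0 ≤ z → 0 ≤ Φ z)
    (hΦmono : ∀ x y : ℝ, 0 ≤ x → x ≤ y → Φ y ≤ Φ x)
    (hΦmass : ∫ ζ in Set.Ioi (0:ℝ), Φ ζ = 1)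
    (hΦmom : IntegrableOn (fun ζ => ζ * Φ ζ) (Set.Ioi (0:ℝ)))
    (W : ℝ → ℝ) (hW : Differentiable ℝ W)
    (hW' : ∀ x : ℝ, 0 ≤ deriv W x ∧ deriv W x ≤ L)
    (hCFL : 0 ≤ lam * L ∧ lam * L ≤ 1)
    (I : ℕ → ℝ)
    (hI : ∀ k : ℕ, I k = ∫ ζ in ((k : ℝ) * Δz)..(((k : ℝ) + 1) * Δz), (1/α) * Φ (ζ/α))
    (y₀ : ℤ → ℝ) (hy₀B : ∃ M, ∀ i, |y₀ i| ≤ M)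
    (w : ℕ → ℤ → ℝ)
    (hw0 : ∀ i : ℤ, w 0 i = discAvg I y₀ i)
    (hwrec : ∀ n : ℕ, ∀ i : ℤ, w (n+1) i = schemeStep I W lam (w n) i) :
    ∀ n : ℕ, ∀ i : ℤ, (⨅ j : ℤ, y₀ j) ≤ w n i ∧ w n i ≤ ⨆ j : ℤ, y₀ j := by
  obtain ⟨B, hB⟩ := hy₀B
  set m := ⨅ j : ℤ, y₀ j with hmdef
  set M := ⨆ j : ℤ, y₀ j with hMdef
  have hbdd_below : BddBelow (Set.range y₀) := ⟨-B, by
    rintro _ ⟨j, rfl⟩; linarith [abs_le.1 (hB j)]⟩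
  have hbdd_above : BddAbove (Set.range y₀) := ⟨B, by
    rintro _ ⟨j, rfl⟩; linarith [abs_le.1 (hB j)]⟩
  have hm : ∀ j, m ≤ y₀ j := fun j => ciInf_le hbdd_below j
  have hM : ∀ j, y₀ j ≤ M := fun j => le_ciSup hbdd_above j
  -- properties of the kernel
  set Φα : ℝ → ℝ := fun ζ => (1/α) * Φ (ζ/α) with hΦαdef
  -- measurability of Φ on Ioi 0
  have hΦaem : AEStronglyMeasurable Φ (volume.restrict (Set.Ioi (0:ℝ))) := by
    have h1 : AEStronglyMeasurable (fun ζ : ℝ => ζ * Φ ζ) (volume.restrict (Set.Ioi (0:ℝ))) :=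
      hΦmom.aestronglyMeasurable
    have h2 : AEStronglyMeasurable (fun ζ : ℝ => ζ⁻¹ * (ζ * Φ ζ))
        (volume.restrict (Set.Ioi (0:ℝ))) :=
      (measurable_inv.aestronglyMeasurable).mul h1
    refine h2.congr ?_
    filter_upwards [ae_restrict_mem measurableSet_Ioi] with x hx
    field_simp [ne_of_gt (Set.mem_Ioi.1 hx)]
  have hΦint : IntegrableOn Φ (Set.Ioi (0:ℝ)) := by
    have hsplit : Set.Ioc (0:ℝ) 1 ∪ Set.Ioi 1 = Set.Ioi 0 :=
      Set.Ioc_union_Ioi_eq_Ioi zero_le_one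
    rw [← hsplit]
    apply IntegrableOn.union
    · have h1 : IntegrableOn Φ (Set.Ioc (0:ℝ) 1) (volume.restrict (Set.Ioi (0:ℝ))) := by
        apply Measure.integrableOn_of_bounded (M := Φ 0)
        · exact ne_of_lt (lt_of_le_of_lt (Measure.restrict_apply_le _ _) measure_Ioc_lt_top)
        · exact hΦaem
        · filter_upwards [ae_restrict_mem measurableSet_Ioc] with x hx
          have hx1 : 0 ≤ Φ x := hΦnonneg x hx.1.le
          have hx2 : Φ x ≤ Φ 0 := hΦmono 0 x le_rfl hx.1.le
          rw [Real.norm_eq_abs, abs_of_nonneg hx1]; exact hx2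
      rw [IntegrableOn, Measure.restrict_restrict measurableSet_Ioc,
        Set.inter_eq_self_of_subset_left Set.Ioc_subset_Ioi_self] at h1
      exact h1
    · refine Integrable.mono (hΦmom.mono_set (Set.Ioi_subset_Ioi zero_le_one))
        (hΦaem.mono_measure (Measure.restrict_mono (Set.Ioi_subset_Ioi zero_le_one) le_rfl)) ?_
      filter_upwards [ae_restrict_mem measurableSet_Ioi] with x hx
      have hx1 : (1:ℝ) ≤ x := le_of_lt hx
      have h1 : 0 ≤ Φ x := hΦnonneg x (by linarith)
      rw [Real.norm_eq_abs, Real.norm_eq_abs, abs_of_nonneg h1,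
        abs_of_nonneg (mul_nonneg (by linarith) h1)]
      nlinarith
  have hΦαint : IntegrableOn Φα (Set.Ioi (0:ℝ)) := by
    have h0 : IntegrableOn (fun x : ℝ => Φ (α⁻¹ * x)) (Set.Ioi (0:ℝ)) := by
      have := (integrableOn_Ioi_comp_mul_left_iff Φ 0 (inv_pos.2 hα)).2
      simpa using this (by simpa using hΦint)
    have : IntegrableOn (fun x : ℝ => (1/α) * Φ (α⁻¹ * x)) (Set.Ioi (0:ℝ)) := h0.const_mul _
    refine this.congr_fun (fun x _ => ?_) measurableSet_Ioi
    simp only [hΦαdef, one_div, div_eq_inv_mul]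
  have hΦαmass : ∫ ζ in Set.Ioi (0:ℝ), Φα ζ = 1 := by
    rw [hΦαdef]
    simp_rw [div_eq_inv_mul]
    rw [MeasureTheory.integral_const_mul]
    rw [integral_comp_mul_left_Ioi Φ 0 (inv_pos.2 hα)]
    rw [mul_zero, hΦmass]
    simp [smul_eq_mul]
    field_simp
  -- nonnegativity and basic facts about I
  have hIpos : ∀ k, 0 ≤ I k := by
    intro k
    rw [hI k]
    apply intervalIntegral.integral_nonneg
    · nlinarith [hΔz.le]
    · intro u hu
      have h1 : 0 ≤ u := le_trans (by positivity) hu.1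
      exact mul_nonneg (by positivity) (hΦnonneg _ (by positivity))
  have hIoc_sub : ∀ k : ℕ, Set.Ioc ((k:ℝ)*Δz) (((k:ℝ)+1)*Δz) ⊆ Set.Ioi (0:ℝ) := by
    intro k x hx
    exact lt_of_le_of_lt (by positivity) hx.1
  have hint : ∀ k : ℕ, IntervalIntegrable Φα volume ((k:ℝ)*Δz) (((k:ℝ)+1)*Δz) := by
    intro k
    rw [intervalIntegrable_iff_integrableOn_Ioc_of_le (by nlinarith)]
    exact hΦαint.mono_set (hIoc_sub k)
  -- I sums to 1
  have hsum_eq : ∀ n : ℕ, ∑ k ∈ Finset.range n, I k = ∫ ζ in (0:ℝ)..((n:ℝ)*Δz), Φα ζ := by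
    intro n
    have hadj := intervalIntegral.sum_integral_adjacent_intervals
      (a := fun k : ℕ => (k:ℝ)*Δz) (f := Φα) (μ := volume) (n := n)
      (fun k _ => by push_cast; exact hint k)
    have hterm : ∀ k ∈ Finset.range n,
        I k = ∫ ζ in ((k:ℝ)*Δz)..(((k+1:ℕ):ℝ)*Δz), Φα ζ := by
      intro k _
      rw [hI k]
      push_cast
      rfl
    rw [Finset.sum_congr rfl hterm, hadj]
    norm_num
  have hIsum : HasSum I 1 := by
    rw [hasSum_iff_tendsto_nat_of_nonneg hIpos 1]
    have htends : Filter.Tendsto (fun n : ℕ => (n:ℝ)*Δz) Filter.atTop Filter.atTop :=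
      Filter.Tendsto.atTop_mul_const hΔz tendsto_natCast_atTop_atTop
    have := intervalIntegral_tendsto_integral_Ioi 0 hΦαint htends
    rw [hΦαmass] at this
    exact this.congr (fun n => (hsum_eq n).symm)
  have hIsummable : Summable I := hIsum.summable
  have hIle1 : ∀ k, I k ≤ 1 := fun k => le_hasSum hIsum k (fun j _ => hIpos j)
  -- I is non-increasing
  have hImono : ∀ k, I (k+1) ≤ I k := by
    intro k
    rw [hI k, hI (k+1)]
    have hshift : (∫ ζ in (((k+1:ℕ):ℝ)*Δz)..((((k+1:ℕ):ℝ)+1)*Δz), Φα ζ)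
        = ∫ ζ in ((k:ℝ)*Δz)..(((k:ℝ)+1)*Δz), Φα (ζ + Δz) := by
      rw [intervalIntegral.integral_comp_add_right]
      congr 1 <;> push_cast <;> ring
    show (∫ ζ in (((k+1:ℕ):ℝ)*Δz)..((((k+1:ℕ):ℝ)+1)*Δz), Φα ζ)
        ≤ ∫ ζ in ((k:ℝ)*Δz)..(((k:ℝ)+1)*Δz), Φα ζ
    rw [hshift]
    apply intervalIntegral.integral_mono_on (by nlinarith)
    · have h := (hint (k+1)).comp_add_right Δz
      have e1 : ((k+1:ℕ):ℝ)*Δz - Δz = (k:ℝ)*Δz := by push_cast; ring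
      have e2 : (((k+1:ℕ):ℝ)+1)*Δz - Δz = ((k:ℝ)+1)*Δz := by push_cast; ring
      rwa [e1, e2] at h
    · exact hint k
    · intro x hx
      have hx0 : 0 ≤ x := le_trans (by positivity) hx.1
      rw [hΦαdef]
      apply mul_le_mul_of_nonneg_left _ (by positivity)
      apply hΦmono
      · positivity
      · exact (div_le_div_iff_of_pos_right hα).2 (by linarith)
  -- properties of W
  have hL0 : 0 ≤ L := le_trans (hW' 0).1 (hW' 0).2
  have hWmono : Monotone W := monotone_of_deriv_nonneg hW (fun x => (hW' x).1)
  have hWlip : ∀ a b : ℝ, a ≤ b → W b - W a ≤ L * (b - a) := by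
    intro a b hab
    set g : ℝ → ℝ := fun x => L * x - W x with hg
    have hgdiff : Differentiable ℝ g := (differentiable_id.const_mul L).sub hW
    have hgderiv : ∀ x, 0 ≤ deriv g x := by
      intro x
      have h1 : HasDerivAt g (L * 1 - deriv W x) x :=
        ((hasDerivAt_id x).const_mul L).sub (hW x).hasDerivAt
      rw [h1.deriv]
      linarith [(hW' x).2]
    have := monotone_of_deriv_nonneg hgdiff hgderiv hab
    simp only [hg] at this
    linarith
  have hlampos : 0 ≤ lam := by
    rw [hlam]; positivity
  -- base case
  have hbase : ∀ i : ℤ, m ≤ discAvg I y₀ i ∧ discAvg I y₀ i ≤ M := by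
    intro i
    have hsummable : Summable (fun k : ℕ => I k * y₀ (i + (k:ℤ))) := by
      apply Summable.of_norm_bounded (g := fun k => I k * B) (hIsummable.mul_right B)
      intro k
      rw [norm_mul, Real.norm_eq_abs, Real.norm_eq_abs, abs_of_nonneg (hIpos k)]
      exact mul_le_mul_of_nonneg_left (hB _) (hIpos k)
    constructor
    · have h1 : HasSum (fun k : ℕ => I k * m) m := by
        simpa using hIsum.mul_right m
      rw [discAvg, ← h1.tsum_eq]
      exact Summable.tsum_le_tsum (fun k => mul_le_mul_of_nonneg_left (hm _) (hIpos k))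
        h1.summable hsummable
    · have h1 : HasSum (fun k : ℕ => I k * M) M := by
        simpa using hIsum.mul_right M
      rw [discAvg, ← h1.tsum_eq]
      exact Summable.tsum_le_tsum (fun k => mul_le_mul_of_nonneg_left (hM _) (hIpos k))
        hsummable h1.summable
  -- induction
  intro n
  induction n with
  | zero =>
    intro i
    rw [hw0 i]
    exact hbase i
  | succ n ih =>
    intro i
    rw [hwrec n i]
    exact step_preserves I hIpos hImono (hIle1 0) hIsummable W L lam m M hlampos hCFL.2 hL0
      hWmono hWlip (w n) ih i
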